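/- Let a > 0, c > 0, and b ∈ (0,1), and define the constant-elasticity inverse demand P(q) = a·q^{−b} for q > 0. Then the profit π(q) = q·P(q) − c·q attains its unique maximum over q > 0 at q* = (a·(1−b)/c)^{1/b}. At q*, the producer surplus PS := π(q*) satisfies PS/q* = c·b/(1−b), the consumer surplus CS := ∫₀^{q*} P(x) dx − q*·P(q*) satisfies CS/q* = c·b/(1−b)², and the appropriability ratio satisfies PS/(PS + CS) = (1−b)/(2−b), which is independent of the marginal cost c. -/

import Mathlib

/-- strict Bernoulli for exponent in (0,1): t^p < 1 + p(t-1) for t>0, t≠1 -/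
lemma rpow_lt_one_add (t p : ℝ) (ht : 0 < t) (ht1 : t ≠ 1) (hp0 : 0 < p) (hp1 : p < 1) :
    t ^ p < 1 + p * (t - 1) := by
  set u := t ^ p with hu
  have hu0 : 0 < u := Real.rpow_pos_of_pos ht p
  have hinv : (t ^ p) ^ (1/p) = t := by
    rw [← Real.rpow_mul ht.le]
    field_simp
    rw [Real.rpow_one]
  have hu1 : u ≠ 1 := by
    intro h
    apply ht1
    rw [hu] at h
    rw [h, Real.one_rpow] at hinv
    exact hinv.symm
  have key := one_add_mul_self_lt_rpow_one_add (s := u - 1) (by linarith) (by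
    intro h; apply hu1; linarith) (p := 1/p) (by
    rw [lt_div_iff₀ hp0]; linarith)
  have h2 : (1 + (u - 1)) ^ (1/p) = t := by
    have h3 : 1 + (u - 1) = u := by ring
    rw [h3, hu]; exact hinv
  rw [h2] at key
  have h6 : p + (u - 1) < p * t := by
    have h7 := mul_lt_mul_of_pos_left key hp0
    calc p + (u - 1) = p * (1 + 1/p * (u - 1)) := by field_simp
      _ < p * t := h7
  linarith

theorem stmt8 (a c b : ℝ) (ha : 0 < a) (hc : 0 < c) (hb0 : 0 < b) (hb1 : b < 1)
    (qs : ℝ) (hqs : qs = (a * (1 - b) / c) ^ ((1 : ℝ) / b)) :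
    0 < qs ∧
    (∀ q > (0 : ℝ), q ≠ qs →
      q * (a * q ^ (-b)) - c * q < qs * (a * qs ^ (-b)) - c * qs) ∧
    (qs * (a * qs ^ (-b)) - c * qs) / qs = c * b / (1 - b) ∧
    ((∫ x in (0 : ℝ)..qs, a * x ^ (-b)) - qs * (a * qs ^ (-b))) / qs = c * b / (1 - b) ^ 2 ∧
    (qs * (a * qs ^ (-b)) - c * qs) /
        ((qs * (a * qs ^ (-b)) - c * qs) +
          ((∫ x in (0 : ℝ)..qs, a * x ^ (-b)) - qs * (a * qs ^ (-b)))) =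
      (1 - b) / (2 - b) := by
  have h1b : 0 < 1 - b := by linarith
  have h1b' : (1 - b) ≠ 0 := h1b.ne'
  have hX : 0 < a * (1 - b) / c := by positivity
  have hq0 : 0 < qs := hqs ▸ Real.rpow_pos_of_pos hX _
  have hqb : qs ^ b = a * (1 - b) / c := by
    rw [hqs, ← Real.rpow_mul hX.le]
    rw [one_div_mul_cancel hb0.ne', Real.rpow_one]
  have hqnb : a * qs ^ (-b) = c / (1 - b) := by
    rw [Real.rpow_neg hq0.le, hqb]
    field_simp
  have hPS : qs * (a * qs ^ (-b)) - c * qs = qs * (c * b / (1 - b)) := by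
    rw [hqnb]; field_simp; ring
  have hsplit : ∀ x : ℝ, 0 < x → x ^ (1 - b) = x * x ^ (-b) := by
    intro x hx
    rw [show (1:ℝ) - b = 1 + -b by ring, Real.rpow_add hx, Real.rpow_one]
  have hint : (∫ x in (0 : ℝ)..qs, a * x ^ (-b)) = a * (qs ^ (1 - b) / (1 - b)) := by
    rw [intervalIntegral.integral_const_mul, integral_rpow (Or.inl (by linarith))]
    rw [Real.zero_rpow (by intro h; linarith [h] : -b + 1 ≠ 0)]
    ring_nf
  have hq1b : a * qs ^ (1 - b) = qs * (c / (1 - b)) := by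
    rw [hsplit qs hq0, show a * (qs * qs ^ (-b)) = qs * (a * qs ^ (-b)) by ring, hqnb]
  have hCS : (∫ x in (0 : ℝ)..qs, a * x ^ (-b)) - qs * (a * qs ^ (-b))
      = qs * (c * b / (1 - b) ^ 2) := by
    rw [hint, show a * (qs ^ (1-b) / (1-b)) = (a * qs ^ (1-b)) / (1-b) by ring, hq1b,
      show qs * (a * qs ^ (-b)) = a * (qs * qs ^ (-b)) by ring, ← hsplit qs hq0, hq1b]
    field_simp
    ring
  refine ⟨hq0, ?_, ?_, ?_, ?_⟩
  · intro q hq hne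
    have hkey := rpow_lt_one_add (q / qs) (1 - b) (by positivity)
      (by intro h; exact hne (by field_simp at h; linarith)) h1b (by linarith)
    have hdiv : (q / qs) ^ (1 - b) = q ^ (1 - b) / qs ^ (1 - b) :=
      Real.div_rpow hq.le hq0.le _
    rw [hdiv] at hkey
    have hqs1b : 0 < qs ^ (1 - b) := Real.rpow_pos_of_pos hq0 _
    have hkey2 : q ^ (1 - b) < qs ^ (1 - b) * (1 + (1 - b) * (q / qs - 1)) := by
      calc q ^ (1 - b) = qs ^ (1 - b) * (q ^ (1-b) / qs ^ (1-b)) := by field_simp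
        _ < _ := mul_lt_mul_of_pos_left hkey hqs1b
    have hmul : a * q ^ (1 - b) < a * qs ^ (1 - b) * (1 + (1 - b) * (q / qs - 1)) := by
      calc a * q ^ (1-b) < a * (qs ^ (1-b) * (1 + (1-b) * (q/qs - 1))) :=
            mul_lt_mul_of_pos_left hkey2 ha
        _ = _ := by ring
    rw [hq1b] at hmul
    have hfin : qs * (c / (1 - b)) * (1 + (1 - b) * (q / qs - 1)) - c * q
        = qs * (a * qs ^ (-b)) - c * qs := by
      rw [hqnb]
      field_simp
      ring
    have hrw : q * (a * q ^ (-b)) = a * q ^ (1 - b) := by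
      rw [hsplit q hq]; ring
    rw [hrw]
    linarith [hmul, hfin.ge, hfin.le]
  · rw [hPS]; field_simp
  · rw [hCS]; field_simp
  · have h2b : (0 : ℝ) < 2 - b := by linarith
    have hsum : qs * (c * b / (1 - b)) + qs * (c * b / (1 - b) ^ 2)
        = qs * (c * b * (2 - b) / (1 - b) ^ 2) := by
      field_simp; ring
    have hS : qs * (c * b * (2 - b) / (1 - b) ^ 2) ≠ 0 := by
      apply ne_of_gt
      apply mul_pos hq0
      apply div_pos (mul_pos (mul_pos hc hb0) h2b) (by positivity)
    rw [hPS, hCS, hsum, div_eq_div_iff hS h2b.ne']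
    field_simp
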